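/- Let f : (0,1) → ℝ be r times differentiable with |f^(r)(x)| ≤ 2/x for all x ∈ (0,1), where r ≥ 2. Define g(x) = f(x²). Then the r-th derivative of g satisfies |g^(r)(x)| ≤ C(r)·(1 + sup_{|α| ≤ r-1} ‖f^(α)‖) for some constant C(r) depending only on r, provided additionally that the derivatives f^(j) for j < r are bounded by 1 on (0,1). -/

import Mathlib

open Set Polynomial Finset

noncomputable def GP : ℕ → ℕ → Polynomial ℝ
  | 0, 0 => 1
  | 0, _+1 => 0
  | n+1, 0 => (GP n 0).derivative
  | n+1, k+1 => (GP n (k+1)).derivative + Polynomial.C 2 * Polynomial.X * GP n k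

lemma GP_zero (n k : ℕ) (h : n < k) : GP n k = 0 := by
  induction n generalizing k with
  | zero => cases k with
    | zero => omega
    | succ k => rfl
  | succ n ih =>
    cases k with
    | zero => omega
    | succ k =>
      rw [GP, ih _ (by omega), ih _ (by omega)]
      simp

lemma GP_diag (n : ℕ) : GP n n = (Polynomial.C 2 * Polynomial.X) ^ n := by
  induction n with
  | zero => rfl
  | succ n ih =>
    rw [GP, GP_zero n (n+1) (by omega), ih]
    simp only [derivative_zero, zero_add]
    rw [pow_succ]; ring

lemma GP_sum_step (n : ℕ) (x : ℝ) (c : ℕ → ℝ) :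
    ∑ k ∈ Finset.range (n+2), (GP (n+1) k).eval x * c k
    = ∑ k ∈ Finset.range (n+1),
        ((GP n k).derivative.eval x * c k + (GP n k).eval x * (c (k+1) * (2*x))) := by
  rw [Finset.sum_range_succ' _ (n+1)]
  rw [Finset.sum_add_distrib]
  have h1 : ∀ k ∈ Finset.range (n+1),
      (GP (n+1) (k+1)).eval x * c (k+1)
      = (GP n (k+1)).derivative.eval x * c (k+1)
        + (GP n k).eval x * (c (k+1) * (2*x)) := by
    intro k _
    rw [show GP (n+1) (k+1) = (GP n (k+1)).derivative + Polynomial.C 2 * Polynomial.X * GP n k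
      from rfl]
    simp; ring
  rw [Finset.sum_congr rfl h1, Finset.sum_add_distrib]
  have h2 : ∑ k ∈ Finset.range (n+1), (GP n k).derivative.eval x * c k
      = (GP n 0).derivative.eval x * c 0
        + ∑ k ∈ Finset.range n, (GP n (k+1)).derivative.eval x * c (k+1) := by
    rw [Finset.sum_range_succ' _ n]; ring
  have h3 : ∑ k ∈ Finset.range (n+1), (GP n (k+1)).derivative.eval x * c (k+1)
      = ∑ k ∈ Finset.range n, (GP n (k+1)).derivative.eval x * c (k+1) := by
    rw [Finset.sum_range_succ]
    rw [GP_zero n (n+1) (by omega)]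
    simp
  rw [h2, h3, show GP (n+1) 0 = (GP n 0).derivative from rfl]
  ring

lemma GP_key (r : ℕ) (f : ℝ → ℝ) (hf : ContDiffOn ℝ r f (Ioo (0:ℝ) 1))
    (n : ℕ) (hn : n ≤ r) :
    ∀ x ∈ Ioo (0:ℝ) 1,
      iteratedDerivWithin n (fun x => f (x ^ 2)) (Ioo (0:ℝ) 1) x
      = ∑ k ∈ Finset.range (n+1),
          (GP n k).eval x * iteratedDerivWithin k f (Ioo (0:ℝ) 1) (x^2) := by
  have hu : UniqueDiffOn ℝ (Ioo (0:ℝ) 1) := isOpen_Ioo.uniqueDiffOn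
  have hsq : ∀ x ∈ Ioo (0:ℝ) 1, x^2 ∈ Ioo (0:ℝ) 1 := by
    rintro x ⟨h0, h1⟩
    exact ⟨by positivity, by nlinarith⟩
  induction n with
  | zero =>
    intro x hx
    simp [iteratedDerivWithin_zero, GP]
  | succ n ih =>
    intro x hx
    have ihn := ih (by omega)
    rw [iteratedDerivWithin_succ]
    have hcongr : derivWithin (iteratedDerivWithin n (fun x => f (x ^ 2)) (Ioo (0:ℝ) 1))
        (Ioo (0:ℝ) 1) x
        = derivWithin (fun y => ∑ k ∈ Finset.range (n+1),
            (GP n k).eval y * iteratedDerivWithin k f (Ioo (0:ℝ) 1) (y^2)) (Ioo (0:ℝ) 1) x :=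
      derivWithin_congr (fun y hy => ihn y hy) (ihn x hx)
    rw [hcongr]
    have hD : HasDerivWithinAt
        (fun y => ∑ k ∈ Finset.range (n+1),
          (GP n k).eval y * iteratedDerivWithin k f (Ioo (0:ℝ) 1) (y^2))
        (∑ k ∈ Finset.range (n+1),
          ((GP n k).derivative.eval x * iteratedDerivWithin k f (Ioo (0:ℝ) 1) (x^2)
            + (GP n k).eval x * (iteratedDerivWithin (k+1) f (Ioo (0:ℝ) 1) (x^2) * (2*x))))
        (Ioo (0:ℝ) 1) x := by
      apply HasDerivWithinAt.fun_sum
      intro k hk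
      have hk' : k < r := by
        have := Finset.mem_range.mp hk; omega
      have hFk : ∀ z ∈ Ioo (0:ℝ) 1,
          HasDerivWithinAt (iteratedDerivWithin k f (Ioo (0:ℝ) 1))
            (iteratedDerivWithin (k+1) f (Ioo (0:ℝ) 1) z) (Ioo (0:ℝ) 1) z := by
        intro z hz
        have hdiff : DifferentiableWithinAt ℝ (iteratedDerivWithin k f (Ioo (0:ℝ) 1))
            (Ioo (0:ℝ) 1) z :=
          hf.differentiableOn_iteratedDerivWithin (by exact_mod_cast hk') hu z hz
        have := hdiff.hasDerivWithinAt
        rwa [← iteratedDerivWithin_succ] at this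
      have hq : HasDerivWithinAt (fun y : ℝ => y^2) (2*x) (Ioo (0:ℝ) 1) x := by
        have h := (hasDerivAt_pow 2 x).hasDerivWithinAt (s := Ioo (0:ℝ) 1)
        convert h using 1
        · rfl
        · rfl
        · push_cast; ring
      have hcomp' := HasDerivWithinAt.comp (h := fun y : ℝ => y^2) (h₂ := iteratedDerivWithin k f (Ioo (0:ℝ) 1)) x (hFk (x^2) (hsq x hx)) hq (fun y hy => hsq y hy)
      have hcomp : HasDerivWithinAt
          (fun y => iteratedDerivWithin k f (Ioo (0:ℝ) 1) (y^2))
          (iteratedDerivWithin (k+1) f (Ioo (0:ℝ) 1) (x^2) * (2*x)) (Ioo (0:ℝ) 1) x := hcomp'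
      exact ((GP n k).hasDerivAt x).hasDerivWithinAt.mul hcomp
    rw [hD.derivWithin (hu x hx)]
    exact (GP_sum_step n x (fun k => iteratedDerivWithin k f (Ioo (0:ℝ) 1) (x^2))).symm

theorem deriv_bound_of_square_subst (r : ℕ) (hr : 2 ≤ r) :
    ∃ C : ℝ, 0 < C ∧
      ∀ (f : ℝ → ℝ) (B : ℝ),
        ContDiffOn ℝ r f (Ioo (0:ℝ) 1) →
        (∀ j ≤ r - 1, ∀ x ∈ Ioo (0:ℝ) 1,
          |iteratedDerivWithin j f (Ioo (0:ℝ) 1) x| ≤ B) →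
        (∀ j < r, ∀ x ∈ Ioo (0:ℝ) 1,
          |iteratedDerivWithin j f (Ioo (0:ℝ) 1) x| ≤ 1) →
        (∀ x ∈ Ioo (0:ℝ) 1,
          |iteratedDerivWithin r f (Ioo (0:ℝ) 1) x| ≤ 2 / x) →
        ∀ x ∈ Ioo (0:ℝ) 1,
          |iteratedDerivWithin r (fun x => f (x ^ 2)) (Ioo (0:ℝ) 1) x|
            ≤ C * (1 + B) := by
  -- get a bound M on the sum of |eval (GP r k)| over [0,1]
  obtain ⟨M, hM⟩ : ∃ M : ℝ, ∀ x ∈ Icc (0:ℝ) 1,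
      (∑ k ∈ Finset.range r, |(GP r k).eval x|) ≤ M := by
    have hc : ContinuousOn (fun x => ∑ k ∈ Finset.range r, |(GP r k).eval x|) (Icc (0:ℝ) 1) := by
      apply continuousOn_finset_sum
      intro k _
      exact ((GP r k).continuous.abs).continuousOn
    obtain ⟨z, hz, hmax⟩ := isCompact_Icc.exists_isMaxOn (by norm_num : (Icc (0:ℝ) 1).Nonempty) hc
    exact ⟨_, fun y hy => hmax hy⟩
  have hM0 : 0 ≤ M := by
    have := hM 0 (by norm_num)
    exact le_trans (Finset.sum_nonneg (fun k _ => abs_nonneg _)) this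
  refine ⟨M + 2^(r+1), by positivity, ?_⟩
  intro f B hf hB h1 htop x hx
  obtain ⟨hx0, hx1⟩ := hx
  have hB0 : 0 ≤ B := by
    have := hB 0 (by omega) (1/2) (by norm_num)
    exact le_trans (abs_nonneg _) this
  have hsq : x^2 ∈ Ioo (0:ℝ) 1 := ⟨by positivity, by nlinarith⟩
  rw [GP_key r f hf r le_rfl x ⟨hx0, hx1⟩]
  rw [Finset.sum_range_succ]
  have htail : |(GP r r).eval x * iteratedDerivWithin r f (Ioo (0:ℝ) 1) (x^2)| ≤ 2^(r+1) := by
    rw [abs_mul, GP_diag]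
    have heval : |((Polynomial.C (2:ℝ) * Polynomial.X) ^ r).eval x| = (2*x)^r := by
      simp [abs_of_nonneg, abs_pow]
      rw [abs_of_nonneg (by positivity)]
    rw [heval]
    have h2 : |iteratedDerivWithin r f (Ioo (0:ℝ) 1) (x^2)| ≤ 2/x^2 := htop _ hsq
    calc (2*x)^r * |iteratedDerivWithin r f (Ioo (0:ℝ) 1) (x^2)|
        ≤ (2*x)^r * (2/x^2) := by
          apply mul_le_mul_of_nonneg_left h2 (by positivity)
      _ = 2^(r+1) * x^(r-2) := by
          rw [mul_pow]
          have : x^r = x^(r-2) * x^2 := by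
            rw [← pow_add]; congr 1; omega
          rw [this]
          field_simp
          ring
      _ ≤ 2^(r+1) * 1 := by
          apply mul_le_mul_of_nonneg_left _ (by positivity)
          exact pow_le_one₀ (le_of_lt hx0) (le_of_lt hx1)
      _ = 2^(r+1) := mul_one _
  have hhead : |∑ k ∈ Finset.range r, (GP r k).eval x * iteratedDerivWithin k f (Ioo (0:ℝ) 1) (x^2)|
      ≤ M * B := by
    calc |∑ k ∈ Finset.range r, (GP r k).eval x * iteratedDerivWithin k f (Ioo (0:ℝ) 1) (x^2)|
        ≤ ∑ k ∈ Finset.range r, |(GP r k).eval x * iteratedDerivWithin k f (Ioo (0:ℝ) 1) (x^2)| :=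
          Finset.abs_sum_le_sum_abs _ _
      _ ≤ ∑ k ∈ Finset.range r, |(GP r k).eval x| * B := by
          apply Finset.sum_le_sum
          intro k hk
          rw [abs_mul]
          exact mul_le_mul_of_nonneg_left
            (hB k (by have := Finset.mem_range.mp hk; omega) _ hsq) (abs_nonneg _)
      _ = (∑ k ∈ Finset.range r, |(GP r k).eval x|) * B := by rw [← Finset.sum_mul]
      _ ≤ M * B := by
          apply mul_le_mul_of_nonneg_right _ hB0
          exact hM x ⟨le_of_lt hx0, le_of_lt hx1⟩
  calc |∑ k ∈ Finset.range r, (GP r k).eval x * iteratedDerivWithin k f (Ioo (0:ℝ) 1) (x^2)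
        + (GP r r).eval x * iteratedDerivWithin r f (Ioo (0:ℝ) 1) (x^2)|
      ≤ M * B + 2^(r+1) := le_trans (abs_add_le _ _) (add_le_add hhead htail)
    _ ≤ (M + 2^(r+1)) * (1 + B) := by
        have h2r : (0:ℝ) ≤ 2^(r+1) := by positivity
        nlinarith
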